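/- Let f : E → ℝ be convex, differentiable with L-Lipschitz gradient, and let 0 < γ ≤ 2/L. Then the gradient descent operator T = Id - γ∇f is 1-Lipschitz (nonexpansive). -/

import Mathlib

open scoped RealInnerProductSpace
open Set

section Aux

variable {E : Type*} [NormedAddCommGroup E] [InnerProductSpace ℝ E] [FiniteDimensional ℝ E]

/-- Derivative of `f` along a line. -/
lemma line_hasDerivAt (f : E → ℝ) (f' : E → E)
    (hdiff : ∀ x, HasGradientAt f (f' x) x) (x v : E) (t : ℝ) :
    HasDerivAt (fun s : ℝ => f (x + s • v)) ⟪f' (x + t • v), v⟫ t := by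
  have hline : HasDerivAt (fun s : ℝ => x + s • v) v t := by
    simpa using (hasDerivAt_id t).smul_const v |>.const_add x
  have hf := (hdiff (x + t • v)).hasFDerivAt
  have := hf.comp_hasDerivAt t hline
  simpa [InnerProductSpace.toDual_apply_apply, Function.comp_def] using this

/-- Gradient inequality for convex functions. -/
lemma grad_ineq (f : E → ℝ) (f' : E → E)
    (hconv : ConvexOn ℝ Set.univ f)
    (hdiff : ∀ x, HasGradientAt f (f' x) x) (x y : E) :
    f x + ⟪f' x, y - x⟫ ≤ f y := by
  set v := y - x with hv
  have hg : ConvexOn ℝ Set.univ (fun s : ℝ => f (x + s • v)) := by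
    have h := hconv.comp_affineMap (AffineMap.lineMap x y : ℝ →ᵃ[ℝ] E)
    simp only [Set.preimage_univ] at h
    have heq : (f ∘ (AffineMap.lineMap x y : ℝ →ᵃ[ℝ] E)) = fun s : ℝ => f (x + s • v) := by
      funext s
      simp only [Function.comp_apply, AffineMap.lineMap_apply_module]
      congr 1
      rw [hv]
      module
    rwa [heq] at h
  have hd : HasDerivAt (fun s : ℝ => f (x + s • v)) ⟪f' x, v⟫ 0 := by
    have := line_hasDerivAt f f' hdiff x v 0
    simpa using this
  have := hg.le_slope_of_hasDerivAt (Set.mem_univ (0:ℝ)) (Set.mem_univ (1:ℝ))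
    one_pos hd
  rw [slope_def_field] at this
  have h1 : x + (1:ℝ) • v = y := by simp [hv]
  have h0 : x + (0:ℝ) • v = x := by simp
  rw [h1, h0] at this
  simp at this
  linarith

/-- Descent lemma. -/
lemma descent (f : E → ℝ) (f' : E → E) (L : ℝ) (hL : 0 < L)
    (hdiff : ∀ x, HasGradientAt f (f' x) x)
    (hlip : ∀ x y, ‖f' x - f' y‖ ≤ L * ‖x - y‖) (x y : E) :
    f y ≤ f x + ⟪f' x, y - x⟫ + L / 2 * ‖y - x‖ ^ 2 := by
  set v := y - x with hv
  set φ : ℝ → ℝ := fun t => f (x + t • v) - t * ⟪f' x, v⟫ - L * t ^ 2 / 2 * ‖v‖ ^ 2 with hφ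
  have hder : ∀ t : ℝ, HasDerivAt φ
      (⟪f' (x + t • v), v⟫ - ⟪f' x, v⟫ - L * t * ‖v‖ ^ 2) t := by
    intro t
    have h1 := line_hasDerivAt f f' hdiff x v t
    have h2 : HasDerivAt (fun t : ℝ => t * ⟪f' x, v⟫) ⟪f' x, v⟫ t := by
      simpa using (hasDerivAt_id t).mul_const ⟪f' x, v⟫
    have h3 : HasDerivAt (fun t : ℝ => L * t ^ 2 / 2 * ‖v‖ ^ 2) (L * t * ‖v‖ ^ 2) t := by
      have : HasDerivAt (fun t : ℝ => t ^ 2) (2 * t) t := by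
        simpa using hasDerivAt_pow 2 t
      have := ((this.const_mul L).div_const 2).mul_const (‖v‖ ^ 2)
      rw [show L * t * ‖v‖ ^ 2 = L * (2 * t) / 2 * ‖v‖ ^ 2 by ring]
      exact this
    exact (h1.sub h2).sub h3
  have hmono : φ 1 ≤ φ 0 := by
    have hconvIcc : Convex ℝ (Icc (0:ℝ) 1) := convex_Icc 0 1
    have hdiffφ : ∀ t ∈ Icc (0:ℝ) 1, HasDerivWithinAt φ
        (⟪f' (x + t • v), v⟫ - ⟪f' x, v⟫ - L * t * ‖v‖ ^ 2) (interior (Icc (0:ℝ) 1)) t :=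
      fun t _ => (hder t).hasDerivWithinAt
    have key : AntitoneOn φ (Icc (0:ℝ) 1) := by
      apply antitoneOn_of_deriv_nonpos hconvIcc
      · exact fun t _ => (hder t).differentiableAt.continuousAt.continuousWithinAt
      · intro t ht
        exact ((hder t).differentiableAt).differentiableWithinAt
      · intro t ht
        rw [interior_Icc] at ht
        rw [(hder t).deriv]
        have hcs : ⟪f' (x + t • v) - f' x, v⟫ ≤ ‖f' (x + t • v) - f' x‖ * ‖v‖ :=
          real_inner_le_norm _ _
        have hl : ‖f' (x + t • v) - f' x‖ ≤ L * (t * ‖v‖) := by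
          have := hlip (x + t • v) x
          simpa [norm_smul, abs_of_pos ht.1, mul_assoc] using this
        have ht0 : (0:ℝ) < t := ht.1
        have : ⟪f' (x + t • v), v⟫ - ⟪f' x, v⟫ ≤ L * t * ‖v‖ * ‖v‖ := by
          rw [← inner_sub_left]
          calc ⟪f' (x + t • v) - f' x, v⟫ ≤ ‖f' (x + t • v) - f' x‖ * ‖v‖ := hcs
            _ ≤ L * (t * ‖v‖) * ‖v‖ := by
                apply mul_le_mul_of_nonneg_right hl (norm_nonneg _)
            _ = L * t * ‖v‖ * ‖v‖ := by ring
        nlinarith [norm_nonneg v]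
    exact key (Set.left_mem_Icc.mpr zero_le_one) (Set.right_mem_Icc.mpr zero_le_one) zero_le_one
  have h1 : x + (1:ℝ) • v = y := by simp [hv]
  have h0 : x + (0:ℝ) • v = x := by simp
  simp only [hφ, h1, h0, one_pow, mul_one, one_mul, zero_mul, mul_zero, sub_zero,
    zero_pow, ne_eq] at hmono
  norm_num at hmono
  linarith

/-- One-sided cocoercivity bound. -/
lemma onesided (f : E → ℝ) (f' : E → E) (L : ℝ) (hL : 0 < L)
    (hconv : ConvexOn ℝ Set.univ f)
    (hdiff : ∀ x, HasGradientAt f (f' x) x)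
    (hlip : ∀ x y, ‖f' x - f' y‖ ≤ L * ‖x - y‖) (x y : E) :
    f y + ⟪f' y, x - y⟫ + 1 / (2 * L) * ‖f' x - f' y‖ ^ 2 ≤ f x := by
  set g := f' x - f' y with hg
  set z := x - (1 / L) • g with hz
  have hA := grad_ineq f f' hconv hdiff y z
  have hB := descent f f' L hL hdiff hlip x z
  have hzx : z - x = -((1 / L) • g) := by rw [hz]; abel
  have hnorm : ‖z - x‖ ^ 2 = (1 / L) ^ 2 * ‖g‖ ^ 2 := by
    rw [hzx, norm_neg, norm_smul, mul_pow, Real.norm_eq_abs,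
      abs_of_pos (by positivity : (0:ℝ) < 1 / L)]
  have hinner1 : ⟪f' x, z - x⟫ = -(1 / L) * ⟪f' x, g⟫ := by
    rw [hzx, inner_neg_right, real_inner_smul_right]; ring
  have hinner2 : ⟪f' y, z - y⟫ = ⟪f' y, x - y⟫ - (1 / L) * ⟪f' y, g⟫ := by
    have : z - y = (x - y) - (1 / L) • g := by rw [hz]; abel
    rw [this, inner_sub_right, real_inner_smul_right]
  have hgg : ⟪f' x, g⟫ - ⟪f' y, g⟫ = ‖g‖ ^ 2 := by
    rw [← inner_sub_left, ← hg, real_inner_self_eq_norm_sq]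
  rw [hinner1, hnorm] at hB
  rw [hinner2] at hA
  have hL' : L ≠ 0 := ne_of_gt hL
  have : L / 2 * ((1 / L) ^ 2 * ‖g‖ ^ 2) = 1 / (2 * L) * ‖g‖ ^ 2 := by
    field_simp
  rw [this] at hB
  have key : 1 / L * ⟪f' x, g⟫ - 1 / L * ⟪f' y, g⟫
      = 1 / (2 * L) * ‖g‖ ^ 2 + 1 / (2 * L) * ‖g‖ ^ 2 := by
    rw [← mul_sub, hgg]
    field_simp
    ring
  linarith [hA, hB, key]

end Aux

/-- The gradient descent operator `Id - γ∇f` is nonexpansive for `0 < γ ≤ 2/L`. -/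
theorem stmt_3 {E : Type*} [NormedAddCommGroup E] [InnerProductSpace ℝ E]
    [FiniteDimensional ℝ E]
    (f : E → ℝ) (f' : E → E) (L γ : ℝ) (hL : 0 < L)
    (hconv : ConvexOn ℝ Set.univ f)
    (hdiff : ∀ x, HasGradientAt f (f' x) x)
    (hlip : ∀ x y, ‖f' x - f' y‖ ≤ L * ‖x - y‖)
    (hγ0 : 0 < γ) (hγ : γ ≤ 2 / L) :
    ∀ x y : E, ‖(x - γ • f' x) - (y - γ • f' y)‖ ≤ ‖x - y‖ := by
  intro x y
  -- cocoercivity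
  have hco : 1 / L * ‖f' x - f' y‖ ^ 2 ≤ ⟪f' x - f' y, x - y⟫ := by
    have h1 := onesided f f' L hL hconv hdiff hlip x y
    have h2 := onesided f f' L hL hconv hdiff hlip y x
    have hsymm : ‖f' y - f' x‖ = ‖f' x - f' y‖ := by rw [← norm_neg]; congr 1; abel
    rw [hsymm] at h2
    have hi : ⟪f' x - f' y, x - y⟫ = ⟪f' x, x - y⟫ - ⟪f' y, x - y⟫ := inner_sub_left _ _ _
    have hi2 : ⟪f' x, y - x⟫ = -⟪f' x, x - y⟫ := by
      rw [← inner_neg_right]; congr 1; abel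
    rw [hi2] at h2
    have : 1 / L = 1 / (2 * L) + 1 / (2 * L) := by field_simp; ring
    rw [this]
    nlinarith [h1, h2]
  set g := f' x - f' y with hgdef
  have hrw : (x - γ • f' x) - (y - γ • f' y) = (x - y) - γ • g := by
    rw [hgdef, smul_sub]; abel
  rw [hrw]
  have hsq : ‖(x - y) - γ • g‖ ^ 2 ≤ ‖x - y‖ ^ 2 := by
    rw [norm_sub_sq_real]
    have h1 : ⟪x - y, γ • g⟫ = γ * ⟪g, x - y⟫ := by
      rw [real_inner_smul_right, real_inner_comm]
    have h2 : ‖γ • g‖ ^ 2 = γ ^ 2 * ‖g‖ ^ 2 := by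
      rw [norm_smul]; simp [abs_of_pos hγ0]; ring
    rw [h1, h2]
    have hco' : γ * (1 / L * ‖g‖ ^ 2) ≤ γ * ⟪g, x - y⟫ :=
      mul_le_mul_of_nonneg_left hco hγ0.le
    have hγL : γ * L ≤ 2 := (le_div_iff₀ hL).mp hγ
    have hcoL : ‖g‖ ^ 2 ≤ L * ⟪g, x - y⟫ := by
      have h3 := mul_le_mul_of_nonneg_left hco hL.le
      rwa [← mul_assoc, mul_one_div, div_self hL.ne', one_mul] at h3
    have hI : (0:ℝ) ≤ ⟪g, x - y⟫ := by nlinarith [sq_nonneg ‖g‖]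
    nlinarith [mul_le_mul_of_nonneg_left hcoL (mul_nonneg hγ0.le hγ0.le),
      mul_le_mul_of_nonneg_left (mul_le_mul_of_nonneg_right hγL hI) hγ0.le]
  nlinarith [norm_nonneg ((x - y) - γ • g), norm_nonneg (x - y), hsq]
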